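/- Let p be a prime, G = SL_2(F_p), L the subspace of strictly upper-triangular matrices in M_2(F_p), and B the upper-triangular Borel subgroup of G. For any x in M_2(F_p), the number of cosets gB in G/B such that x ∈ g L g^{-1} equals p+1 if x = 0, equals 1 if x ≠ 0 and tr(x) = 0 and det(x) = 0, and equals 0 otherwise. -/

import Mathlib

open Matrix

/-- The upper-triangular Borel subgroup `B` of `SL₂(𝔽_p)`. -/
def upperTriangularSL (p : ℕ) [Fact p.Prime] :
    Subgroup (Matrix.SpecialLinearGroup (Fin 2) (ZMod p)) where
  carrier := {g | (g : Matrix (Fin 2) (Fin 2) (ZMod p)) 1 0 = 0}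
  one_mem' := by simp
  mul_mem' := by
    intro a b ha hb
    simp only [Set.mem_setOf_eq] at *
    show ((a * b : Matrix.SpecialLinearGroup (Fin 2) (ZMod p)) :
        Matrix (Fin 2) (Fin 2) (ZMod p)) 1 0 = 0
    rw [Matrix.SpecialLinearGroup.coe_mul, Matrix.mul_apply]
    simp [Fin.sum_univ_two, ha, hb]
  inv_mem' := by
    intro a ha
    simp only [Set.mem_setOf_eq] at *
    rw [Matrix.SpecialLinearGroup.SL2_inv_expl]
    simp [ha]

section LALAux

variable {p : ℕ} [Fact p.Prime]

local notation "SL2" => Matrix.SpecialLinearGroup (Fin 2) (ZMod p)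
local notation "M2" => Matrix (Fin 2) (Fin 2) (ZMod p)

lemma LAL.det_entries (g : SL2) :
    (g : M2) 0 0 * (g : M2) 1 1 - (g : M2) 0 1 * (g : M2) 1 0 = 1 := by
  have := g.prop
  rwa [Matrix.det_fin_two] at this

lemma LAL.coset_eq {g g' : SL2} :
    (QuotientGroup.mk g : SL2 ⧸ upperTriangularSL p) = QuotientGroup.mk g' ↔
      (g : M2) 0 0 * (g' : M2) 1 0 - (g : M2) 1 0 * (g' : M2) 0 0 = 0 := by
  rw [QuotientGroup.eq]
  have h0 : g⁻¹ * g' ∈ upperTriangularSL p ↔ ((g⁻¹ * g' : SL2) : M2) 1 0 = 0 := Iff.rfl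
  rw [h0, Matrix.SpecialLinearGroup.coe_mul, Matrix.SpecialLinearGroup.SL2_inv_expl,
    Matrix.mul_apply, Fin.sum_univ_two]
  simp only [Matrix.cons_val', Matrix.cons_val_zero, Matrix.cons_val_one, Matrix.head_cons,
    Matrix.head_fin_const]
  constructor <;> intro h <;> linear_combination h

/-- first column entries determine the coset; slope map. -/
noncomputable def LAL.slopeSL (g : SL2) : Option (ZMod p) :=
  if (g : M2) 0 0 = 0 then none else some ((g : M2) 1 0 / (g : M2) 0 0)

lemma LAL.col_ne_zero (g : SL2) (h : (g : M2) 0 0 = 0) : (g : M2) 1 0 ≠ 0 := by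
  intro h'
  have := LAL.det_entries g
  rw [h, h'] at this
  simp at this

lemma LAL.slope_eq_iff {g g' : SL2} :
    LAL.slopeSL g = LAL.slopeSL g' ↔
      (g : M2) 0 0 * (g' : M2) 1 0 - (g : M2) 1 0 * (g' : M2) 0 0 = 0 := by
  unfold LAL.slopeSL
  by_cases h : (g : M2) 0 0 = 0
  · by_cases h' : (g' : M2) 0 0 = 0
    · simp [h, h']
    · have hg := LAL.col_ne_zero g h
      simp only [if_pos h, if_neg h', h]
      constructor
      · rintro ⟨⟩
      · intro he
        exact absurd (by linear_combination -he) (mul_ne_zero hg h')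
  · by_cases h' : (g' : M2) 0 0 = 0
    · have hg' := LAL.col_ne_zero g' h'
      simp only [if_neg h, if_pos h', h']
      constructor
      · rintro ⟨⟩
      · intro he
        exact absurd (by linear_combination he) (mul_ne_zero h hg')
    · simp only [if_neg h, if_neg h', Option.some_inj]
      rw [div_eq_div_iff h h', sub_eq_zero]
      constructor
      · intro hh
        linear_combination -hh
      · intro hh
        linear_combination -hh

noncomputable def LAL.slopeQ (q : SL2 ⧸ upperTriangularSL p) : Option (ZMod p) :=
  Quotient.liftOn' q LAL.slopeSL (by
    intro a b hab
    rw [QuotientGroup.leftRel_apply] at hab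
    rw [LAL.slope_eq_iff]
    exact LAL.coset_eq.mp (QuotientGroup.eq.mpr hab))

lemma LAL.slopeQ_bij : Function.Bijective (LAL.slopeQ (p := p)) := by
  constructor
  · intro q q'
    induction q using Quotient.inductionOn'
    induction q' using Quotient.inductionOn'
    intro h
    exact LAL.coset_eq.mpr (LAL.slope_eq_iff.mp h)
  · intro t
    match t with
    | none =>
        refine ⟨QuotientGroup.mk ⟨!![0,-1;1,0], by simp [Matrix.det_fin_two_of]⟩, ?_⟩
        show LAL.slopeSL _ = none
        simp [LAL.slopeSL]
    | some t =>
        refine ⟨QuotientGroup.mk ⟨!![1,0;t,1], by simp [Matrix.det_fin_two_of]⟩, ?_⟩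
        show LAL.slopeSL _ = some t
        simp [LAL.slopeSL]

lemma LAL.card_quot : Nat.card (SL2 ⧸ upperTriangularSL p) = p + 1 := by
  rw [Nat.card_eq_of_bijective _ LAL.slopeQ_bij]
  have h : Nat.card (Option (ZMod p)) = Fintype.card (Option (ZMod p)) := Nat.card_eq_fintype_card
  rw [h, Fintype.card_option, ZMod.card]

lemma LAL.coe_mul_inv (g : SL2) : (g : M2) * ((g⁻¹ : SL2) : M2) = 1 := by
  rw [← Matrix.SpecialLinearGroup.coe_mul, mul_inv_cancel]; rfl

lemma LAL.exists_l_iff {x : M2} (htr : x 0 0 + x 1 1 = 0) (g : SL2) :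
    (∃ l : M2, l 0 0 = 0 ∧ l 1 0 = 0 ∧ l 1 1 = 0 ∧
        x = (g : M2) * l * ((g⁻¹ : SL2) : M2)) ↔
      (x 0 0 * (g : M2) 0 0 + x 0 1 * (g : M2) 1 0 = 0 ∧
       x 1 0 * (g : M2) 0 0 + x 1 1 * (g : M2) 1 0 = 0) := by
  constructor
  · rintro ⟨l, h00, h10, h11, hx⟩
    rw [Matrix.SpecialLinearGroup.coe_inv, Matrix.adjugate_fin_two] at hx
    have e00 := congrArg (fun m : M2 => m 0 0) hx
    have e01 := congrArg (fun m : M2 => m 0 1) hx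
    have e10 := congrArg (fun m : M2 => m 1 0) hx
    have e11 := congrArg (fun m : M2 => m 1 1) hx
    simp only [Matrix.mul_apply, Fin.sum_univ_two, h00, h10, h11] at e00 e01 e10 e11
    simp at e00 e01 e10 e11
    constructor
    · linear_combination (g : M2) 0 0 * e00 + (g : M2) 1 0 * e01
    · linear_combination (g : M2) 0 0 * e10 + (g : M2) 1 0 * e11
  · rintro ⟨k1, k2⟩
    refine ⟨((g⁻¹ : SL2) : M2) * x * (g : M2), ?_, ?_, ?_, ?_⟩
    · show (((g⁻¹ : SL2) : M2) * x * (g : M2)) 0 0 = 0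
      rw [Matrix.SpecialLinearGroup.coe_inv, Matrix.adjugate_fin_two]
      simp only [Matrix.mul_apply, Fin.sum_univ_two]
      simp
      linear_combination (g : M2) 1 1 * k1 - (g : M2) 0 1 * k2
    · show (((g⁻¹ : SL2) : M2) * x * (g : M2)) 1 0 = 0
      rw [Matrix.SpecialLinearGroup.coe_inv, Matrix.adjugate_fin_two]
      simp only [Matrix.mul_apply, Fin.sum_univ_two]
      simp
      linear_combination -(g : M2) 1 0 * k1 + (g : M2) 0 0 * k2
    · show (((g⁻¹ : SL2) : M2) * x * (g : M2)) 1 1 = 0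
      rw [Matrix.SpecialLinearGroup.coe_inv, Matrix.adjugate_fin_two]
      simp only [Matrix.mul_apply, Fin.sum_univ_two]
      simp
      linear_combination ((g : M2) 0 0 * (g : M2) 1 1 - (g : M2) 0 1 * (g : M2) 1 0) * htr
        - (g : M2) 1 1 * k1 + (g : M2) 0 1 * k2
    · rw [show (g : M2) * (((g⁻¹ : SL2) : M2) * x * (g : M2)) * ((g⁻¹ : SL2) : M2)
          = ((g : M2) * ((g⁻¹ : SL2) : M2)) * x * ((g : M2) * ((g⁻¹ : SL2) : M2)) by
        noncomm_ring]
      rw [LAL.coe_mul_inv, one_mul, mul_one]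

end LALAux

/-- The linear algebra lemma (§5.1): for `x ∈ M₂(𝔽_p)`, the number of cosets `gB ∈ G/B`
with `x ∈ g L g⁻¹` (where `L` is the strictly upper-triangular subspace) is `p+1` if `x = 0`,
`1` if `x ≠ 0` and `tr x = det x = 0`, and `0` otherwise. -/
theorem linear_algebra_lemma (p : ℕ) [Fact p.Prime] (x : Matrix (Fin 2) (Fin 2) (ZMod p)) :
    Nat.card {q : Matrix.SpecialLinearGroup (Fin 2) (ZMod p) ⧸ upperTriangularSL p //
      ∃ g : Matrix.SpecialLinearGroup (Fin 2) (ZMod p),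
        QuotientGroup.mk g = q ∧
        ∃ l : Matrix (Fin 2) (Fin 2) (ZMod p),
          l 0 0 = 0 ∧ l 1 0 = 0 ∧ l 1 1 = 0 ∧
          x = (g : Matrix (Fin 2) (Fin 2) (ZMod p)) * l *
              ((g⁻¹ : Matrix.SpecialLinearGroup (Fin 2) (ZMod p)) :
                Matrix (Fin 2) (Fin 2) (ZMod p))} =
    if x = 0 then p + 1
    else if x ≠ 0 ∧ x.trace = 0 ∧ x.det = 0 then 1
    else 0 := by
  by_cases hx0 : x = 0
  · rw [if_pos hx0]
    subst hx0
    have hall : ∀ q : Matrix.SpecialLinearGroup (Fin 2) (ZMod p) ⧸ upperTriangularSL p,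
        ∃ g : Matrix.SpecialLinearGroup (Fin 2) (ZMod p),
          QuotientGroup.mk g = q ∧
          ∃ l : Matrix (Fin 2) (Fin 2) (ZMod p),
            l 0 0 = 0 ∧ l 1 0 = 0 ∧ l 1 1 = 0 ∧
            (0 : Matrix (Fin 2) (Fin 2) (ZMod p)) =
              (g : Matrix (Fin 2) (Fin 2) (ZMod p)) * l *
              ((g⁻¹ : Matrix.SpecialLinearGroup (Fin 2) (ZMod p)) :
                Matrix (Fin 2) (Fin 2) (ZMod p)) := by
      intro q
      induction q using Quotient.inductionOn' with
      | h g => exact ⟨g, rfl, 0, rfl, rfl, rfl, by simp⟩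
    rw [Nat.card_congr (Equiv.subtypeUnivEquiv hall)]
    exact LAL.card_quot
  · rw [if_neg hx0]
    have htr2 : x.trace = x 0 0 + x 1 1 := Matrix.trace_fin_two x
    have hdet2 : x.det = x 0 0 * x 1 1 - x 0 1 * x 1 0 := Matrix.det_fin_two x
    by_cases htd : x.trace = 0 ∧ x.det = 0
    · rw [if_pos ⟨hx0, htd.1, htd.2⟩]
      obtain ⟨htr, hdet⟩ := htd
      rw [htr2] at htr
      rw [hdet2] at hdet
      rw [Nat.card_eq_one_iff_unique]
      constructor
      · -- Subsingleton
        constructor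
        rintro ⟨q1, g, rfl, hl⟩ ⟨q2, g', rfl, hl'⟩
        obtain ⟨k1, k2⟩ := (LAL.exists_l_iff htr g).mp hl
        obtain ⟨k1', k2'⟩ := (LAL.exists_l_iff htr g').mp hl'
        refine Subtype.ext (LAL.coset_eq.mpr ?_)
        have hne : x 0 0 ≠ 0 ∨ x 0 1 ≠ 0 ∨ x 1 0 ≠ 0 ∨ x 1 1 ≠ 0 := by
          by_contra hcon
          push_neg at hcon
          obtain ⟨h1, h2, h3, h4⟩ := hcon
          refine hx0 ?_
          ext i j
          fin_cases i <;> fin_cases j <;> simpa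
        rcases hne with h | h | h | h
        · refine mul_left_cancel₀ h ?_
          rw [mul_zero]
          linear_combination (g' : Matrix (Fin 2) (Fin 2) (ZMod p)) 1 0 * k1
            - (g : Matrix (Fin 2) (Fin 2) (ZMod p)) 1 0 * k1'
        · refine mul_left_cancel₀ h ?_
          rw [mul_zero]
          linear_combination - (g' : Matrix (Fin 2) (Fin 2) (ZMod p)) 0 0 * k1
            + (g : Matrix (Fin 2) (Fin 2) (ZMod p)) 0 0 * k1'
        · refine mul_left_cancel₀ h ?_
          rw [mul_zero]
          linear_combination (g' : Matrix (Fin 2) (Fin 2) (ZMod p)) 1 0 * k2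
            - (g : Matrix (Fin 2) (Fin 2) (ZMod p)) 1 0 * k2'
        · refine mul_left_cancel₀ h ?_
          rw [mul_zero]
          linear_combination - (g' : Matrix (Fin 2) (Fin 2) (ZMod p)) 0 0 * k2
            + (g : Matrix (Fin 2) (Fin 2) (ZMod p)) 0 0 * k2'
      · -- Nonempty: construct g with kernel first column
        by_cases hb : x 0 1 ≠ 0
        · refine ⟨⟨QuotientGroup.mk
            ⟨!![-(x 0 1), 0; x 0 0, -(x 0 1)⁻¹], by
              rw [Matrix.det_fin_two_of]
              field_simp
              ring⟩, ?_⟩⟩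
          refine ⟨_, rfl, (LAL.exists_l_iff htr _).mpr ⟨?_, ?_⟩⟩
          · show x 0 0 * (-(x 0 1)) + x 0 1 * (x 0 0) = 0
            ring
          · show x 1 0 * (-(x 0 1)) + x 1 1 * (x 0 0) = 0
            linear_combination hdet
        · push_neg at hb
          have ha : x 0 0 = 0 := by
            have h2 : x 0 0 * x 0 0 = 0 := by linear_combination x 0 0 * htr - hdet - x 1 0 * hb
            exact pow_eq_zero_iff (n := 2) (by norm_num) |>.mp (by linear_combination h2)
          have hd : x 1 1 = 0 := by linear_combination htr - ha
          have hc : x 1 0 ≠ 0 := by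
            intro hc
            refine hx0 ?_
            ext i j
            fin_cases i <;> fin_cases j <;> simpa [ha, hb, hc, hd]
          refine ⟨⟨QuotientGroup.mk
            ⟨!![0, -(x 1 0)⁻¹; x 1 0, 0], by
              rw [Matrix.det_fin_two_of]
              field_simp
              ring⟩, ?_⟩⟩
          refine ⟨_, rfl, (LAL.exists_l_iff htr _).mpr ⟨?_, ?_⟩⟩
          · show x 0 0 * 0 + x 0 1 * (x 1 0) = 0
            rw [hb]
            ring
          · show x 1 0 * 0 + x 1 1 * (x 1 0) = 0
            rw [hd]
            ring
    · rw [if_neg (by tauto)]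
      have : IsEmpty {q : Matrix.SpecialLinearGroup (Fin 2) (ZMod p) ⧸ upperTriangularSL p //
        ∃ g : Matrix.SpecialLinearGroup (Fin 2) (ZMod p),
          QuotientGroup.mk g = q ∧
          ∃ l : Matrix (Fin 2) (Fin 2) (ZMod p),
            l 0 0 = 0 ∧ l 1 0 = 0 ∧ l 1 1 = 0 ∧
            x = (g : Matrix (Fin 2) (Fin 2) (ZMod p)) * l *
                ((g⁻¹ : Matrix.SpecialLinearGroup (Fin 2) (ZMod p)) :
                  Matrix (Fin 2) (Fin 2) (ZMod p))} := by
        constructor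
        rintro ⟨q, g, rfl, l, h00, h10, h11, hx⟩
        refine htd ⟨?_, ?_⟩
        · rw [hx, Matrix.trace_mul_comm]
          rw [← Matrix.mul_assoc, ← Matrix.SpecialLinearGroup.coe_mul, inv_mul_cancel]
          have h1 : ((1 : Matrix.SpecialLinearGroup (Fin 2) (ZMod p)) :
              Matrix (Fin 2) (Fin 2) (ZMod p)) = 1 := rfl
          rw [h1, Matrix.one_mul, Matrix.trace_fin_two, h00, h11, add_zero]
        · rw [hx, Matrix.det_mul, Matrix.det_mul]
          rw [Matrix.SpecialLinearGroup.det_coe, Matrix.SpecialLinearGroup.det_coe,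
            Matrix.det_fin_two, h00, h10, h11]
          ring
      rw [Nat.card_of_isEmpty]
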